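/- arXiv:1508.06005 — 2 statements merged into one kernel-verified Lean document; each statement's English description precedes it below -/
import Mathlib

section
/- Minimum extrapolation: if T' ⊆ ℝ^m × ℝ^s satisfies (P1) ray unboundedness ((X,Y) ∈ T' and γ > 0 imply (γX, γY) ∈ T'), (P2) convexity, (P3) monotonicity ((X,Y) ∈ T', X' ≥ X, Y' ≤ Y imply (X',Y') ∈ T'), and (P4) contains every observation (X_j, Y_j), then T' contains every point (X, Y) for which there exists λ ∈ ℝ^n with λ ≥ 0, λ ≠ 0, Σ_j λ_j X_j ≤ X and Y ≤ Σ_j λ_j Y_j. -/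
open Finset

/-- Minimum extrapolation: any set `T'` satisfying ray
unboundedness, convexity, monotonicity, and inclusion of the observations
contains every point dominated by a nonnegative, nonzero combination of the
observations. -/
theorem minimum_extrapolation
    (n m s : ℕ) (X : Fin n → Fin m → ℝ) (Y : Fin n → Fin s → ℝ)
    (hX : ∀ j i, 0 ≤ X j i) (hXne : ∀ j, X j ≠ 0)
    (hY : ∀ j r, 0 ≤ Y j r) (hYne : ∀ j, Y j ≠ 0)
    (T' : Set ((Fin m → ℝ) × (Fin s → ℝ)))
    (hP1 : ∀ P ∈ T', ∀ γ : ℝ, 0 < γ →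
      ((fun i => γ * P.1 i, fun r => γ * P.2 r) ∈ T'))
    (hP2 : ∀ Pt ∈ T', ∀ Pu ∈ T', ∀ μ : ℝ, 0 ≤ μ → μ ≤ 1 →
      ((fun i => μ * Pt.1 i + (1 - μ) * Pu.1 i,
        fun r => μ * Pt.2 r + (1 - μ) * Pu.2 r) ∈ T'))
    (hP3 : ∀ P ∈ T', ∀ X' : Fin m → ℝ, ∀ Y' : Fin s → ℝ,
      (∀ i, P.1 i ≤ X' i) → (∀ r, Y' r ≤ P.2 r) → (X', Y') ∈ T')
    (hP4 : ∀ j, (X j, Y j) ∈ T') :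
    ∀ Xt : Fin m → ℝ, ∀ Yt : Fin s → ℝ,
      (∃ lam : Fin n → ℝ, (∀ j, 0 ≤ lam j) ∧ (∃ j, 0 < lam j) ∧
        (∀ i, ∑ j, lam j * X j i ≤ Xt i) ∧ (∀ r, Yt r ≤ ∑ j, lam j * Y j r)) →
      (Xt, Yt) ∈ T' := by
  -- addition closure
  have hadd : ∀ P ∈ T', ∀ Q ∈ T',
      ((fun i => P.1 i + Q.1 i, fun r => P.2 r + Q.2 r) : (Fin m → ℝ) × (Fin s → ℝ)) ∈ T' := by
    intro P hP Q hQ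
    have h2 := hP2 P hP Q hQ (1/2) (by norm_num) (by norm_num)
    have h3 := hP1 _ h2 2 (by norm_num)
    simpa using (by
      convert h3 using 2 <;> funext x <;> simp <;> ring)
  rintro Xt Yt ⟨lam, hlam0, ⟨j0, hj0⟩, hXle, hYle⟩
  -- main claim by induction over nonempty finsets
  have key : ∀ S : Finset (Fin n), S.Nonempty → (∀ j ∈ S, 0 < lam j) →
      ((fun i => ∑ j ∈ S, lam j * X j i, fun r => ∑ j ∈ S, lam j * Y j r)
        : (Fin m → ℝ) × (Fin s → ℝ)) ∈ T' := by
    intro S hS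
    induction hS using Finset.Nonempty.cons_induction with
    | singleton a =>
      intro hpos
      have ha := hpos a (by simp)
      have := hP1 _ (hP4 a) (lam a) ha
      simpa using this
    | cons a S ha hS ih =>
      intro hpos
      have hA := hP1 _ (hP4 a) (lam a) (hpos a (by simp))
      have hB := ih (fun j hj => hpos j (by simp [hj]))
      have := hadd _ hA _ hB
      simpa [Finset.sum_insert ha] using this
  set S : Finset (Fin n) := Finset.univ.filter (fun j => 0 < lam j) with hSdef
  have hSne : S.Nonempty := ⟨j0, by simp [hSdef, hj0]⟩
  have hmem := key S hSne (fun j hj => by simpa [hSdef] using hj)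
  refine hP3 _ hmem Xt Yt (fun i => ?_) (fun r => ?_) <;> dsimp only
  · exact le_trans (le_of_eq (Finset.sum_filter_of_ne fun j _ h =>
      (hlam0 j).lt_of_ne (Ne.symm (left_ne_zero_of_mul h)))) (hXle i)
  · exact le_trans (hYle r) (le_of_eq (Finset.sum_filter_of_ne fun j _ h =>
      (hlam0 j).lt_of_ne (Ne.symm (left_ne_zero_of_mul h))).symm)
end

section
/- Inclusion of the inefficient DMU₄ changes the super-efficiency ranking: the input-oriented IRS DEA super-efficiency of the target (2, 10) relative to the index set {1, 2, 4}, i.e. inf{θ ∈ ℝ : ∃ λ₁, λ₂, λ₄ ≥ 0, λ₁ + λ₂ + λ₄ ≥ 1, λ₁ + 2λ₂ + 2λ₄ ≤ 2θ, λ₁ + 2λ₂ + 9λ₄ ≥ 10}, equals 10/9; in particular it is strictly less than the super-efficiency 2 of the target (1, 1) relative to {2, 3, 4}, so the priority order of DMU₁ and DMU₃ is reversed by adding DMU₄. -/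
lemma aux1 : IsLeast {θ : ℝ | ∃ l₁ l₂ l₄ : ℝ, 0 ≤ l₁ ∧ 0 ≤ l₂ ∧ 0 ≤ l₄ ∧
      1 ≤ l₁ + l₂ + l₄ ∧ l₁ + 2 * l₂ + 2 * l₄ ≤ θ * 2 ∧
      10 ≤ l₁ + 2 * l₂ + 9 * l₄} (10 / 9) := by
  constructor
  · exact ⟨0, 0, 10/9, by norm_num⟩
  · rintro θ ⟨l₁, l₂, l₄, h1, h2, h4, _, hin, hout⟩
    nlinarith

lemma aux2 : IsLeast {θ : ℝ | ∃ l₂ l₃ l₄ : ℝ, 0 ≤ l₂ ∧ 0 ≤ l₃ ∧ 0 ≤ l₄ ∧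
      1 ≤ l₂ + l₃ + l₄ ∧ 2 * l₂ + 2 * l₃ + 2 * l₄ ≤ θ ∧
      1 ≤ 2 * l₂ + 10 * l₃ + 9 * l₄} 2 := by
  constructor
  · exact ⟨1, 0, 0, by norm_num⟩
  · rintro θ ⟨l₂, l₃, l₄, h2, h3, h4, hs, hin, hout⟩
    linarith

/-- Including the inefficient `DMU₄` changes the
super-efficiency ranking: the super-efficiency of `DMU₃ = (2, 10)` relative
to `{DMU₁, DMU₂, DMU₄}` equals `10/9`, which is strictly less than the
super-efficiency `2` of `DMU₁ = (1, 1)` relative to `{DMU₂, DMU₃, DMU₄}`. -/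
theorem irs_superefficiency_reversed_by_dmu4 :
    sInf {θ : ℝ | ∃ l₁ l₂ l₄ : ℝ, 0 ≤ l₁ ∧ 0 ≤ l₂ ∧ 0 ≤ l₄ ∧
      1 ≤ l₁ + l₂ + l₄ ∧ l₁ + 2 * l₂ + 2 * l₄ ≤ θ * 2 ∧
      10 ≤ l₁ + 2 * l₂ + 9 * l₄} = 10 / 9 ∧
    sInf {θ : ℝ | ∃ l₂ l₃ l₄ : ℝ, 0 ≤ l₂ ∧ 0 ≤ l₃ ∧ 0 ≤ l₄ ∧
      1 ≤ l₂ + l₃ + l₄ ∧ 2 * l₂ + 2 * l₃ + 2 * l₄ ≤ θ ∧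
      1 ≤ 2 * l₂ + 10 * l₃ + 9 * l₄} = 2 ∧
    sInf {θ : ℝ | ∃ l₁ l₂ l₄ : ℝ, 0 ≤ l₁ ∧ 0 ≤ l₂ ∧ 0 ≤ l₄ ∧
      1 ≤ l₁ + l₂ + l₄ ∧ l₁ + 2 * l₂ + 2 * l₄ ≤ θ * 2 ∧
      10 ≤ l₁ + 2 * l₂ + 9 * l₄} <
    sInf {θ : ℝ | ∃ l₂ l₃ l₄ : ℝ, 0 ≤ l₂ ∧ 0 ≤ l₃ ∧ 0 ≤ l₄ ∧
      1 ≤ l₂ + l₃ + l₄ ∧ 2 * l₂ + 2 * l₃ + 2 * l₄ ≤ θ ∧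
      1 ≤ 2 * l₂ + 10 * l₃ + 9 * l₄} := by
  have e1 := aux1.csInf_eq
  have e2 := aux2.csInf_eq
  refine ⟨e1, e2, ?_⟩
  rw [e1, e2]; norm_num
end
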